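/- In the proof that zero symmetric difference of equivalence-class multisets implies isomorphism, the key map is well-defined and a graph isomorphism: if N1 = (V1, E1) and N2 = (V2, E2) are S-DAGs with no internal equivalent pairs and Υ(N1) = Υ(N2), then the map α : V1 → V2 sending each node to the unique node of N2 equivalent to it is a bijection satisfying (u,v) ∈ E1 if and only if (α(u), α(v)) ∈ E2, and α sends each leaf of N1 to the leaf of N2 with the same label. -/

import Mathlib

open scoped Classical

/-- A finite directed acyclic graph whose leaves are (injectively) labeled in `S`. -/
structure LDag (S : Type) : Type 1 where
  V : Type
  fin : Fintype V
  adj : V → V → Prop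
  acyclic : WellFounded (fun a b => adj b a)
  lab : V → S
  labInj : ∀ u v : V, (∀ w, ¬ adj u w) → (∀ w, ¬ adj v w) → lab u = lab v → u = v

attribute [instance] LDag.fin

namespace LDag

variable {S : Type}

/-- A leaf is a node with no children. -/
def IsLeaf (N : LDag S) (v : N.V) : Prop := ∀ w, ¬ N.adj v w

/-- `v` is a descendant of `u` (every node is a descendant of itself). -/
def Desc (N : LDag S) (u v : N.V) : Prop := Relation.ReflTransGen N.adj u v

/-- The cluster of `u`: the set of labels of the leaves that are descendants of `u`. -/
def cluster (N : LDag S) (u : N.V) : Set S :=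
  {s | ∃ v, N.Desc u v ∧ N.IsLeaf v ∧ N.lab v = s}

/-- A tree node: a node with at most one parent. -/
def TreeNode (N : LDag S) (v : N.V) : Prop :=
  ∀ p q, N.adj p v → N.adj q v → p = q

/-- A root: a node with no parents. -/
def IsRoot (N : LDag S) (r : N.V) : Prop := ∀ u, ¬ N.adj u r

/-- Tree-child: every internal node has a child that is a tree node. -/
def TreeChild (N : LDag S) : Prop :=
  ∀ v, ¬ N.IsLeaf v → ∃ w, N.adj v w ∧ N.TreeNode w

/-- `PathN N u v k`: there is a directed path of length `k` from `u` to `v`. -/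
inductive PathN (N : LDag S) : N.V → N.V → ℕ → Prop
  | refl (v : N.V) : PathN N v v 0
  | cons {u v w : N.V} {k : ℕ} : N.adj u v → PathN N v w k → PathN N u w (k + 1)

/-- The height of a node: the largest length of a directed path from it to a leaf. -/
noncomputable def height (N : LDag S) (v : N.V) : ℕ :=
  sSup {k | ∃ s, N.IsLeaf s ∧ PathN N v s k}

/-- Node equivalence between (possibly equal) labeled DAGs, defined recursively:
two leaves with the same label are equivalent, and two internal nodes are equivalent
when their children can be matched into equivalent pairs. -/
noncomputable def equivTo (N1 N2 : LDag S) : N1.V → N2.V → Prop :=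
  N1.acyclic.fix (fun u ih v =>
    (N1.IsLeaf u ∧ N2.IsLeaf v ∧ N1.lab u = N2.lab v) ∨
    (¬ N1.IsLeaf u ∧ ¬ N2.IsLeaf v ∧
      ∃ f : {w // N1.adj u w} ≃ {w // N2.adj v w},
        ∀ w : {w // N1.adj u w}, ih w.1 w.2 (f w).1))

end LDag

/-- Pre-nested labels: finitely branching trees of labels (multisets are obtained
as a quotient by `NEq` below). -/
inductive PreNested (S : Type) : Type
  | leaf : S → PreNested S
  | node : List (PreNested S) → PreNested S

/-- Equality of pre-nested labels as nested multisets. -/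
inductive NEq {S : Type} : PreNested S → PreNested S → Prop
  | leaf (a : S) : NEq (.leaf a) (.leaf a)
  | node {l m : List (PreNested S)} : List.Forall₂ NEq l m → NEq (.node l) (.node m)
  | perm {l m : List (PreNested S)} : l.Perm m → NEq (.node l) (.node m)
  | symm {a b : PreNested S} : NEq a b → NEq b a
  | trans {a b c : PreNested S} : NEq a b → NEq b c → NEq a c

mutual
  theorem NEq.refl {S : Type} : ∀ a : PreNested S, NEq a a
    | .leaf s => .leaf s
    | .node l => .node (NEq.reflL l)
  theorem NEq.reflL {S : Type} : ∀ l : List (PreNested S), List.Forall₂ NEq l l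
    | [] => .nil
    | a :: l => .cons (NEq.refl a) (NEq.reflL l)
end

instance PreNested.setoid (S : Type) : Setoid (PreNested S) :=
  ⟨NEq, ⟨NEq.refl, fun h => h.symm, fun h1 h2 => h1.trans h2⟩⟩

/-- Nested multisets (of multisets of ...) of labels. -/
def Nested (S : Type) : Type := Quotient (PreNested.setoid S)

/-- `TaxaIn s p`: the taxon `s` occurs somewhere (at any nesting depth) in `p`. -/
inductive TaxaIn {S : Type} : S → PreNested S → Prop
  | leaf (s : S) : TaxaIn s (.leaf s)
  | node {s : S} {p : PreNested S} {l : List (PreNested S)} :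
      p ∈ l → TaxaIn s p → TaxaIn s (.node l)

mutual
  /-- Nesting depth of a pre-nested label: a singleton `{s}` has depth 1. -/
  def depthP {S : Type} : PreNested S → ℕ
    | .leaf _ => 1
    | .node l => depthL l + 1
  def depthL {S : Type} : List (PreNested S) → ℕ
    | [] => 0
    | p :: ps => max (depthP p) (depthL ps)
end

namespace LDag

variable {S : Type}

/-- The nested label of a node: the singleton of its label for a leaf, and the
multiset of the nested labels of its children otherwise. -/
noncomputable def nested (N : LDag S) : N.V → Nested S :=
  N.acyclic.fix (fun v ih =>
    if h : N.IsLeaf v then (⟦PreNested.leaf (N.lab v)⟧ : Nested S)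
    else ⟦PreNested.node (((Finset.univ.filter (fun w => N.adj v w)).attach.toList).map
        (fun w => (ih w.1 (Finset.mem_filter.mp w.2).2).out))⟧)

/-- `Υ(N)`: the multiset of equivalence classes (= nested labels) of the nodes of `N`,
with multiplicities. -/
noncomputable def UpsilonM (N : LDag S) : Multiset (Nested S) :=
  Finset.univ.val.map N.nested

/-- Label-preserving isomorphisms of labeled DAGs. -/
structure Iso (N1 N2 : LDag S) where
  toEquiv : N1.V ≃ N2.V
  adj_iff : ∀ u v : N1.V, N2.adj (toEquiv u) (toEquiv v) ↔ N1.adj u v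
  lab_leaf : ∀ v : N1.V, N1.IsLeaf v → N2.lab (toEquiv v) = N1.lab v

def IsIso (N1 N2 : LDag S) : Prop := Nonempty (Iso N1 N2)

theorem Iso.leaf_map {N1 N2 : LDag S} (e : Iso N1 N2) {v : N1.V} (h : N1.IsLeaf v) :
    N2.IsLeaf (e.toEquiv v) := by
  intro w hw
  have hw' : N2.adj (e.toEquiv v) (e.toEquiv (e.toEquiv.symm w)) := by simpa using hw
  exact h _ ((e.adj_iff _ _).mp hw')

def Iso.refl (N : LDag S) : Iso N N :=
  ⟨Equiv.refl _, fun _ _ => Iff.rfl, fun _ _ => rfl⟩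

def Iso.symm {N1 N2 : LDag S} (e : Iso N1 N2) : Iso N2 N1 where
  toEquiv := e.toEquiv.symm
  adj_iff u v := by rw [← e.adj_iff]; simp
  lab_leaf v hv := by
    have h1 : N1.IsLeaf (e.toEquiv.symm v) := by
      intro w hw
      have : N2.adj v (e.toEquiv w) := by
        have := (e.adj_iff (e.toEquiv.symm v) w).mpr hw
        simpa using this
      exact hv _ this
    have := e.lab_leaf _ h1
    simpa using this.symm

def Iso.trans {N1 N2 N3 : LDag S} (e : Iso N1 N2) (f : Iso N2 N3) : Iso N1 N3 where
  toEquiv := e.toEquiv.trans f.toEquiv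
  adj_iff u v := by
    simp only [Equiv.trans_apply]
    rw [f.adj_iff, e.adj_iff]
  lab_leaf v hv := by
    simp only [Equiv.trans_apply]
    rw [f.lab_leaf _ (e.leaf_map hv), e.lab_leaf _ hv]

instance isoSetoid (S : Type) : Setoid (LDag S) :=
  ⟨IsIso, ⟨fun N => ⟨Iso.refl N⟩, fun ⟨e⟩ => ⟨e.symm⟩, fun ⟨e⟩ ⟨f⟩ => ⟨e.trans f⟩⟩⟩

/-- Isomorphism classes of labeled DAGs. -/
def IsoClass (S : Type) : Type 1 := Quotient (isoSetoid S)

/-- The rooted subnetwork `N(u)` generated by a node `u`: the induced subgraph on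
the set of descendants of `u`. -/
noncomputable def subnet (N : LDag S) (u : N.V) : LDag S where
  V := {v // N.Desc u v}
  fin := Subtype.fintype _
  adj a b := N.adj a.1 b.1
  acyclic := by
    have h : (fun (a b : {v // N.Desc u v}) => N.adj b.1 a.1) =
        InvImage (fun a b => N.adj b a) Subtype.val := rfl
    rw [h]
    exact InvImage.wf _ N.acyclic
  lab v := N.lab v.1
  labInj := by
    intro a b ha hb hlab
    apply Subtype.ext
    refine N.labInj a.1 b.1 ?_ ?_ hlab
    · intro w hw
      exact ha ⟨w, a.2.trans (Relation.ReflTransGen.single hw)⟩ hw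
    · intro w hw
      exact hb ⟨w, b.2.trans (Relation.ReflTransGen.single hw)⟩ hw

/-- `Σ(N)`: the multiset of isomorphism classes of the rooted subnetworks generated
by the nodes of `N`, with multiplicities. -/
noncomputable def SigmaM (N : LDag S) : Multiset (IsoClass S) :=
  Finset.univ.val.map (fun u => (Quotient.mk (isoSetoid S) (N.subnet u) : IsoClass S))

/-- Nakhleh's dissimilarity `m(N1,N2) = |Υ(N1) △ Υ(N2)| / 2`. -/
noncomputable def mDist (N1 N2 : LDag S) : ℝ :=
  (((N1.UpsilonM - N2.UpsilonM) + (N2.UpsilonM - N1.UpsilonM)).card : ℝ) / 2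

/-- The distance `σ(N1,N2) = |Σ(N1) △ Σ(N2)| / 2`. -/
noncomputable def sigmaDist (N1 N2 : LDag S) : ℝ :=
  (((N1.SigmaM - N2.SigmaM) + (N2.SigmaM - N1.SigmaM)).card : ℝ) / 2

end LDag

/-- An `S`-DAG: a labeled DAG whose leaves are bijectively labeled by `S`. -/
structure SDag (S : Type) extends LDag S where
  surjLab : ∀ s : S, ∃ v, toLDag.IsLeaf v ∧ toLDag.lab v = s

/-- A phylogenetic network on `S`: a rooted `S`-DAG. -/
structure PhyloNetwork (S : Type) extends SDag S where
  rooted : ∃! r, toLDag.IsRoot r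

/-! ### Auxiliary lemmas -/

section AuxMultiset

variable {α β γ : Type*}

theorem forall₂_rel {r : α → β → Prop} : ∀ {l₁ : List α} {l₂ : List β},
    List.Forall₂ r l₁ l₂ → Multiset.Rel r (↑l₁) (↑l₂)
  | _, _, List.Forall₂.nil => by simpa using Multiset.Rel.zero
  | _, _, List.Forall₂.cons h hl => by
      rw [← Multiset.cons_coe, ← Multiset.cons_coe]
      exact Multiset.Rel.cons h (forall₂_rel hl)

theorem rel_nodup_equiv {r : α → β → Prop} {s : Multiset α} {t : Multiset β}
    (h : Multiset.Rel r s t) :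
    s.Nodup → t.Nodup → ∃ e : {x // x ∈ s} ≃ {y // y ∈ t}, ∀ x, r x.1 (e x).1 := by
  induction h with
  | zero =>
    intro _ _
    exact ⟨⟨fun x => (Multiset.notMem_zero _ x.2).elim,
            fun y => (Multiset.notMem_zero _ y.2).elim,
            fun x => (Multiset.notMem_zero _ x.2).elim,
            fun y => (Multiset.notMem_zero _ y.2).elim⟩,
          fun x => (Multiset.notMem_zero _ x.2).elim⟩
  | @cons a b s t hab _h ih =>
    intro hs ht
    rw [Multiset.nodup_cons] at hs ht
    obtain ⟨e, he⟩ := ih hs.2 ht.2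
    refine ⟨⟨fun x => if hx : x.1 ∈ s then
              ⟨(e ⟨x.1, hx⟩).1, Multiset.mem_cons_of_mem (e ⟨x.1, hx⟩).2⟩
            else ⟨b, Multiset.mem_cons_self b t⟩,
            fun y => if hy : y.1 ∈ t then
              ⟨(e.symm ⟨y.1, hy⟩).1, Multiset.mem_cons_of_mem (e.symm ⟨y.1, hy⟩).2⟩
            else ⟨a, Multiset.mem_cons_self a s⟩, ?_, ?_⟩, ?_⟩
    · intro x
      by_cases hx : x.1 ∈ s
      · simp only [dif_pos hx, dif_pos (e ⟨x.1, hx⟩).2, Subtype.coe_eta,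
          Equiv.symm_apply_apply]
      · simp only [dif_neg hx, dif_neg ht.1]
        refine Subtype.ext ?_
        rcases Multiset.mem_cons.mp x.2 with h' | h'
        · exact h'.symm
        · exact absurd h' hx
    · intro y
      by_cases hy : y.1 ∈ t
      · simp only [dif_pos hy, dif_pos (e.symm ⟨y.1, hy⟩).2, Subtype.coe_eta,
          Equiv.apply_symm_apply]
      · simp only [dif_neg hy, dif_neg hs.1]
        refine Subtype.ext ?_
        rcases Multiset.mem_cons.mp y.2 with h' | h'
        · exact h'.symm
        · exact absurd h' hy
    · intro x
      by_cases hx : x.1 ∈ s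
      · simpa only [Equiv.coe_fn_mk, dif_pos hx] using he ⟨x.1, hx⟩
      · rcases Multiset.mem_cons.mp x.2 with h' | h'
        · simp only [Equiv.coe_fn_mk, dif_neg hx]
          rw [h']
          exact hab
        · exact absurd h' hx

theorem map_univ_val_eq [Fintype α] [Fintype β] (e : α ≃ β)
    (g : α → γ) (h : β → γ) (hc : ∀ x, h (e x) = g x) :
    Multiset.map g Finset.univ.val = Multiset.map h Finset.univ.val := by
  conv_rhs => rw [← Multiset.map_univ_val_equiv e]
  rw [Multiset.map_map]
  exact Multiset.map_congr rfl (fun x _ => (hc x).symm)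

end AuxMultiset

section AuxNEq

variable {S : Type}

instance : IsTrans (PreNested S) NEq := ⟨fun _ _ _ => NEq.trans⟩

theorem NEq.inv {a b : PreNested S} (h : NEq a b) :
    (∃ s, a = .leaf s ∧ b = .leaf s) ∨
    (∃ l m, a = .node l ∧ b = .node m ∧
      Multiset.Rel (NEq (S := S)) (↑l : Multiset (PreNested S)) (↑m : Multiset (PreNested S))) := by
  refine NEq.rec
    (motive_1 := fun a b _ =>
      (∃ s, a = .leaf s ∧ b = .leaf s) ∨
      (∃ l m, a = .node l ∧ b = .node m ∧
        Multiset.Rel (NEq (S := S)) (↑l : Multiset (PreNested S)) (↑m : Multiset (PreNested S))))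
    (motive_2 := fun l m _ =>
      Multiset.Rel (NEq (S := S)) (↑l : Multiset (PreNested S)) (↑m : Multiset (PreNested S)))
    ?_ ?_ ?_ ?_ ?_ ?_ ?_ h
  · intro s
    exact Or.inl ⟨s, rfl, rfl⟩
  · intro l m _ ih
    exact Or.inr ⟨l, m, rfl, rfl, ih⟩
  · intro l m h
    refine Or.inr ⟨l, m, rfl, rfl, ?_⟩
    rw [← Multiset.coe_eq_coe.mpr h]
    exact (Multiset.rel_eq.mpr rfl).mono (fun a _ b _ hab => hab ▸ NEq.refl a)
  · intro a b _h ih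
    rcases ih with ⟨s, rfl, rfl⟩ | ⟨l, m, rfl, rfl, hr⟩
    · exact Or.inl ⟨s, rfl, rfl⟩
    · exact Or.inr ⟨m, l, rfl, rfl,
        (Multiset.rel_flip.mpr hr).mono (fun a _ b _ hab => hab.symm)⟩
  · intro a b c _h1 _h2 ih1 ih2
    rcases ih1 with ⟨s, rfl, rfl⟩ | ⟨l, m, rfl, rfl, hr1⟩
    · rcases ih2 with ⟨s', hs', rfl⟩ | ⟨l', m', hl', _, _⟩
      · exact Or.inl ⟨s', hs' ▸ rfl, rfl⟩
      · exact absurd hl' (by simp)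
    · rcases ih2 with ⟨s', hs', _⟩ | ⟨l', m', hl', rfl, hr2⟩
      · exact absurd hs' (by simp)
      · refine Or.inr ⟨l, m', rfl, rfl, ?_⟩
        have hlm : l' = m := by injection hl'.symm
        exact Multiset.Rel.trans (NEq (S := S)) hr1 (hlm ▸ hr2)
  · simpa using Multiset.Rel.zero
  · intro a b l₁ l₂ hab _ _ ih2
    rw [← Multiset.cons_coe, ← Multiset.cons_coe]
    exact Multiset.Rel.cons hab ih2

theorem NEq_node_rel {l m : List (PreNested S)}
    (h : NEq (.node l) (.node m)) : Multiset.Rel (NEq (S := S)) (↑l : Multiset (PreNested S)) (↑m : Multiset (PreNested S)) := by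
  rcases h.inv with ⟨s, hs, _⟩ | ⟨l', m', hl, hm, hr⟩
  · exact absurd hs (by simp)
  · have h1 : l' = l := by injection hl.symm
    have h2 : m' = m := by injection hm.symm
    exact h1 ▸ h2 ▸ hr

theorem NEq_leaf_leaf {s t : S} (h : NEq (.leaf s) (.leaf t)) : s = t := by
  rcases h.inv with ⟨s', hs, ht⟩ | ⟨l, m, hl, _, _⟩
  · have h1 : s = s' := by injection hs
    have h2 : t = s' := by injection ht
    rw [h1, h2]
  · exact absurd hl (by simp)

theorem NEq_leaf_node {s : S} {m : List (PreNested S)}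
    (h : NEq (.leaf s) (.node m)) : False := by
  rcases h.inv with ⟨s', _, ht⟩ | ⟨l, m', hl, _, _⟩
  · exact absurd ht (by simp)
  · exact absurd hl (by simp)

end AuxNEq

namespace LDag

variable {S : Type}

theorem equivTo_def (N1 N2 : LDag S) (u : N1.V) (v : N2.V) :
    N1.equivTo N2 u v ↔
    ((N1.IsLeaf u ∧ N2.IsLeaf v ∧ N1.lab u = N2.lab v) ∨
     (¬ N1.IsLeaf u ∧ ¬ N2.IsLeaf v ∧
       ∃ f : {w // N1.adj u w} ≃ {w // N2.adj v w},
         ∀ w : {w // N1.adj u w}, N1.equivTo N2 w.1 (f w).1)) := by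
  unfold equivTo
  rw [WellFounded.fix_eq]

theorem nested_def (N : LDag S) (v : N.V) :
    N.nested v = if h : N.IsLeaf v then (⟦PreNested.leaf (N.lab v)⟧ : Nested S)
      else ⟦PreNested.node (((Finset.univ.filter (fun w => N.adj v w)).attach.toList).map
        (fun w => (N.nested w.1).out))⟧ := by
  unfold nested
  rw [WellFounded.fix_eq]
  rfl

theorem childMS_eq (N : LDag S) (v : N.V) :
    ((((Finset.univ.filter (fun w => N.adj v w)).attach.toList).map
        (fun w => (N.nested w.1).out) : List (PreNested S)) : Multiset (PreNested S))
    = Multiset.map (fun w : {w // N.adj v w} => (N.nested w.1).out) Finset.univ.val := by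
  rw [← Multiset.map_coe, Finset.coe_toList, Finset.attach_eq_univ]
  exact map_univ_val_eq (Equiv.subtypeEquivRight (fun x => by simp)) _ _ (fun x => rfl)

theorem equivTo_iff_nested (N1 N2 : LDag S) : ∀ (u : N1.V) (v : N2.V),
    N1.equivTo N2 u v ↔ N1.nested u = N2.nested v := by
  intro u
  refine N1.acyclic.induction
    (C := fun u => ∀ v : N2.V, N1.equivTo N2 u v ↔ N1.nested u = N2.nested v) u ?_
  intro u ih v
  constructor
  · intro h
    rw [equivTo_def] at h
    rcases h with ⟨hu, hv, hlab⟩ | ⟨hu, hv, f, hf⟩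
    · rw [nested_def, nested_def, dif_pos hu, dif_pos hv, hlab]
    · rw [nested_def, nested_def, dif_neg hu, dif_neg hv]
      apply Quotient.sound
      refine NEq.perm ?_
      rw [← Multiset.coe_eq_coe, childMS_eq, childMS_eq]
      refine map_univ_val_eq f _ _ (fun w => ?_)
      have h1 := (ih w.1 w.2 (f w).1).mp (hf w)
      rw [h1]
  · intro h
    rw [nested_def, nested_def] at h
    by_cases hu : N1.IsLeaf u <;> by_cases hv : N2.IsLeaf v
    · rw [dif_pos hu, dif_pos hv] at h
      exact (equivTo_def N1 N2 u v).mpr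
        (Or.inl ⟨hu, hv, NEq_leaf_leaf (Quotient.exact h)⟩)
    · rw [dif_pos hu, dif_neg hv] at h
      exact absurd (Quotient.exact h) (fun hh => NEq_leaf_node hh)
    · rw [dif_neg hu, dif_pos hv] at h
      exact absurd (Quotient.exact h).symm (fun hh => NEq_leaf_node hh)
    · rw [dif_neg hu, dif_neg hv] at h
      have hrel := NEq_node_rel (Quotient.exact h)
      rw [childMS_eq, childMS_eq] at hrel
      rw [Multiset.rel_map] at hrel
      obtain ⟨e0, he0⟩ := rel_nodup_equiv hrel Finset.univ.nodup Finset.univ.nodup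
      let e1 : {x // x ∈ (Finset.univ.val : Multiset {w // N1.adj u w})} ≃ {w // N1.adj u w} :=
        Equiv.subtypeUnivEquiv (fun x => Finset.mem_val.mpr (Finset.mem_univ x))
      let e2 : {x // x ∈ (Finset.univ.val : Multiset {w // N2.adj v w})} ≃ {w // N2.adj v w} :=
        Equiv.subtypeUnivEquiv (fun x => Finset.mem_val.mpr (Finset.mem_univ x))
      refine (equivTo_def N1 N2 u v).mpr (Or.inr ⟨hu, hv, (e1.symm.trans e0).trans e2, fun w => ?_⟩)
      have h1 := he0 (e1.symm w)
      have h2 : (e1.symm w).1 = w := rfl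
      rw [h2] at h1
      have h3 : N1.nested w.1 = N2.nested (e0 (e1.symm w)).1.1 := by
        have h4 : (⟦(N1.nested w.1).out⟧ : Nested S) = ⟦(N2.nested (e0 (e1.symm w)).1.1).out⟧ :=
          Quotient.sound h1
        exact (Quotient.out_eq _).symm.trans (h4.trans (Quotient.out_eq _))
      exact (ih w.1 w.2 _).mpr h3

theorem nested_injective (N : LDag S) (h : ∀ u v : N.V, N.equivTo N u v → u = v) :
    Function.Injective N.nested :=
  fun u v huv => h u v ((equivTo_iff_nested N N u v).mpr huv)

end LDag
/-- If `N1` and `N2` have no internal equivalent pairs and `Υ(N1) = Υ(N2)`, then each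
node of `N1` is equivalent to a unique node of `N2`, and the resulting map is a
label-preserving graph isomorphism. -/
theorem alpha_is_iso {S : Type} (N1 N2 : SDag S)
    (h1 : ∀ u v : N1.V, N1.toLDag.equivTo N1.toLDag u v → u = v)
    (h2 : ∀ u v : N2.V, N2.toLDag.equivTo N2.toLDag u v → u = v)
    (hU : N1.toLDag.UpsilonM = N2.toLDag.UpsilonM) :
    (∀ u : N1.V, ∃! v : N2.V, N1.toLDag.equivTo N2.toLDag u v) ∧
    (∀ α : N1.V → N2.V, (∀ u, N1.toLDag.equivTo N2.toLDag u (α u)) →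
      Function.Bijective α ∧
      (∀ u v : N1.V, N1.adj u v ↔ N2.adj (α u) (α v)) ∧
      (∀ v : N1.V, N1.toLDag.IsLeaf v →
        N2.toLDag.IsLeaf (α v) ∧ N2.lab (α v) = N1.lab v)) := by
  have inj1 : Function.Injective N1.toLDag.nested := N1.toLDag.nested_injective h1
  have inj2 : Function.Injective N2.toLDag.nested := N2.toLDag.nested_injective h2
  have hiff := LDag.equivTo_iff_nested N1.toLDag N2.toLDag
  -- existence of an equivalent node in the other network
  have hex1 : ∀ u : N1.V, ∃ v : N2.V, N2.toLDag.nested v = N1.toLDag.nested u := by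
    intro u
    have hm : N1.toLDag.nested u ∈ N2.toLDag.UpsilonM := by
      rw [← hU]
      exact Multiset.mem_map_of_mem _ (Finset.mem_val.mpr (Finset.mem_univ u))
    obtain ⟨v, _, hv⟩ := Multiset.mem_map.mp hm
    exact ⟨v, hv⟩
  have hex2 : ∀ v : N2.V, ∃ u : N1.V, N1.toLDag.nested u = N2.toLDag.nested v := by
    intro v
    have hm : N2.toLDag.nested v ∈ N1.toLDag.UpsilonM := by
      rw [hU]
      exact Multiset.mem_map_of_mem _ (Finset.mem_val.mpr (Finset.mem_univ v))
    obtain ⟨u, _, hu⟩ := Multiset.mem_map.mp hm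
    exact ⟨u, hu⟩
  have key : ∀ u : N1.V, ∃! v : N2.V, N1.toLDag.equivTo N2.toLDag u v := by
    intro u
    obtain ⟨v, hv⟩ := hex1 u
    refine ⟨v, (hiff u v).mpr hv.symm, fun v' hv' => ?_⟩
    apply inj2
    rw [hv, ← (hiff u v').mp hv']
  refine ⟨key, fun α hα => ?_⟩
  have hnα : ∀ u, N2.toLDag.nested (α u) = N1.toLDag.nested u :=
    fun u => ((hiff u (α u)).mp (hα u)).symm
  have hinj : Function.Injective α := by
    intro u u' h
    apply inj1
    rw [← hnα u, ← hnα u', h]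
  have hsurj : Function.Surjective α := by
    intro v
    obtain ⟨u, hu⟩ := hex2 v
    refine ⟨u, ?_⟩
    apply inj2
    rw [hnα u, hu]
  refine ⟨⟨hinj, hsurj⟩, ?_, ?_⟩
  · intro u v
    constructor
    · intro hadj
      have hu := hα u
      rw [LDag.equivTo_def] at hu
      rcases hu with ⟨hl, _, _⟩ | ⟨_, _, f, hf⟩
      · exact absurd hadj (hl v)
      · have h3 := hf ⟨v, hadj⟩
        have h4 : α v = (f ⟨v, hadj⟩).1 :=
          (key v).unique (hα v) h3
        rw [h4]
        exact (f ⟨v, hadj⟩).2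
    · intro hadj
      have hu := hα u
      rw [LDag.equivTo_def] at hu
      rcases hu with ⟨_, hl, _⟩ | ⟨_, _, f, hf⟩
      · exact absurd hadj (hl (α v))
      · set w : {w // N1.adj u w} := f.symm ⟨α v, hadj⟩ with hw
        have h3 := hf w
        have h4 : (f w).1 = α v := by rw [hw, f.apply_symm_apply]
        rw [h4] at h3
        have h5 : w.1 = v := by
          apply inj1
          rw [← hnα v, (hiff w.1 (α v)).mp h3]
        rw [← h5]
        exact w.2
  · intro v hv
    have h3 := hα v
    rw [LDag.equivTo_def] at h3
    rcases h3 with ⟨_, hl, hlab⟩ | ⟨hnl, _, _⟩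
    · exact ⟨hl, hlab.symm⟩
    · exact absurd hv hnl
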